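/- The circulant graph C_{14}(1,4) is not a W₂ graph. -/

import Mathlib

open SimpleGraph

/-- The circulant graph `C_n(S)` on `ℤ/nℤ`: vertices `i, j` are adjacent iff
`min{|i−j|, n−|i−j|} ∈ S`, i.e. iff `i − j` or `j − i` is congruent mod `n`
to an element of `S ⊆ {1, …, ⌊n/2⌋}`. -/
def circ (n : ℕ) (S : Set ℕ) : SimpleGraph (ZMod n) :=
  SimpleGraph.circulantGraph ((fun s : ℕ => (s : ZMod n)) '' S)

/-- `s` is an independent set of `G`. -/
def IsIndep {V : Type*} (G : SimpleGraph V) (s : Finset V) : Prop :=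
  ∀ ⦃u⦄, u ∈ s → ∀ ⦃w⦄, w ∈ s → ¬ G.Adj u w

/-- The independence number `α(G)`. -/
noncomputable def indepNum {V : Type*} [Fintype V] (G : SimpleGraph V) : ℕ :=
  sSup {k | ∃ s : Finset V, IsIndep G s ∧ s.card = k}

/-- `G` is a W₂ graph: it has at least two vertices and every pair of disjoint
independent sets is contained in a pair of disjoint maximum independent sets. -/
def IsW2 {V : Type*} [Fintype V] (G : SimpleGraph V) : Prop :=
  2 ≤ Fintype.card V ∧
  ∀ A B : Finset V, IsIndep G A → IsIndep G B → Disjoint A B →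
    ∃ A' B' : Finset V, A ⊆ A' ∧ B ⊆ B' ∧ Disjoint A' B' ∧
      IsIndep G A' ∧ IsIndep G B' ∧ A'.card = _root_.indepNum G ∧ B'.card = _root_.indepNum G

/-- The disjoint union of `d` copies of the graph `G`. -/
def copies {V : Type*} (d : ℕ) (G : SimpleGraph V) : SimpleGraph (Fin d × V) where
  Adj p q := p.1 = q.1 ∧ G.Adj p.2 q.2
  symm := ⟨fun p q h => ⟨h.1.symm, h.2.symm⟩⟩
  loopless := ⟨fun p h => G.irrefl h.2⟩
lemma adj_iff (i j : ZMod 14) :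
    (circ 14 {1, 4}).Adj i j ↔ i ≠ j ∧ (i - j = 1 ∨ i - j = 4 ∨ j - i = 1 ∨ j - i = 4) := by
  simp [circ, SimpleGraph.circulantGraph, fromRel_adj, Set.mem_image]
  tauto

lemma indep_witness : IsIndep (circ 14 {1, 4}) ({0, 2, 5, 8, 11} : Finset (ZMod 14)) := by
  intro u hu w hw
  rw [adj_iff]
  fin_cases hu <;> fin_cases hw <;> decide

lemma five_le : 5 ≤ _root_.indepNum (circ 14 {1, 4}) := by
  apply le_csSup
  · exact ⟨14, fun k ⟨s, _, hc⟩ => hc ▸ le_trans (Finset.card_le_card (Finset.subset_univ s))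
      (by simp [ZMod.card])⟩
  · exact ⟨{0, 2, 5, 8, 11}, indep_witness, by decide⟩

theorem stmt_13 : ¬ IsW2 (circ 14 {1, 4}) := by
  rintro ⟨-, h⟩
  obtain ⟨A', B', -, hBsub, -, -, hBind, -, hBcard⟩ :=
    h ∅ ({1, 8} : Finset (ZMod 14)) (by intro u hu; simp at hu)
      (by intro u hu w hw; rw [adj_iff]; fin_cases hu <;> fin_cases hw <;> decide)
      (by simp)
  have h1 : (1 : ZMod 14) ∈ B' := hBsub (by decide)
  have h8 : (8 : ZMod 14) ∈ B' := hBsub (by decide)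
  have hcard5 : 5 ≤ B'.card := hBcard ▸ five_le
  -- every element of B' lies in T = {1,3,6,8,10,13}
  have hT : ∀ v ∈ B', v ∈ ({1, 3, 6, 8, 10, 13} : Finset (ZMod 14)) := by
    intro v hv
    by_contra hvT
    have key : ((circ 14 {1,4}).Adj v 1) ∨ ((circ 14 {1,4}).Adj v 8) := by
      have : ∀ v : ZMod 14, v ∉ ({1, 3, 6, 8, 10, 13} : Finset (ZMod 14)) →
          (v ≠ 1 ∧ (v - 1 = 1 ∨ v - 1 = 4 ∨ 1 - v = 1 ∨ 1 - v = 4)) ∨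
          (v ≠ 8 ∧ (v - 8 = 1 ∨ v - 8 = 4 ∨ 8 - v = 1 ∨ 8 - v = 4)) := by decide
      rcases this v hvT with h' | h'
      · exact Or.inl ((adj_iff v 1).mpr h')
      · exact Or.inr ((adj_iff v 8).mpr h')
    rcases key with h' | h'
    · exact hBind hv h1 h'
    · exact hBind hv h8 h'
  -- the two forbidden pairs
  have hp1 : ¬((3 : ZMod 14) ∈ B' ∧ (13 : ZMod 14) ∈ B') := by
    rintro ⟨ha, hb⟩
    exact hBind ha hb ((adj_iff 3 13).mpr (by decide))
  have hp2 : ¬((6 : ZMod 14) ∈ B' ∧ (10 : ZMod 14) ∈ B') := by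
    rintro ⟨ha, hb⟩
    exact hBind ha hb ((adj_iff 6 10).mpr (by decide))
  -- case analysis: B' is contained in a 4-element set
  have hle : B'.card ≤ 4 := by
    by_cases h3 : (3 : ZMod 14) ∈ B' <;> by_cases h6 : (6 : ZMod 14) ∈ B'
    · have h13 : (13 : ZMod 14) ∉ B' := fun hh => hp1 ⟨h3, hh⟩
      have h10 : (10 : ZMod 14) ∉ B' := fun hh => hp2 ⟨h6, hh⟩
      calc B'.card ≤ ({1, 3, 6, 8} : Finset (ZMod 14)).card := by
            apply Finset.card_le_card
            intro v hv
            have := hT v hv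
            fin_cases this <;> first | decide | (exact absurd hv h13) | (exact absurd hv h10)
        _ = 4 := by decide
    · have h13 : (13 : ZMod 14) ∉ B' := fun hh => hp1 ⟨h3, hh⟩
      calc B'.card ≤ ({1, 3, 8, 10} : Finset (ZMod 14)).card := by
            apply Finset.card_le_card
            intro v hv
            have := hT v hv
            fin_cases this <;> first | decide | (exact absurd hv h13) | (exact absurd hv h6)
        _ = 4 := by decide
    · have h10 : (10 : ZMod 14) ∉ B' := fun hh => hp2 ⟨h6, hh⟩
      calc B'.card ≤ ({1, 6, 8, 13} : Finset (ZMod 14)).card := by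
            apply Finset.card_le_card
            intro v hv
            have := hT v hv
            fin_cases this <;> first | decide | (exact absurd hv h10) | (exact absurd hv h3)
        _ = 4 := by decide
    · calc B'.card ≤ ({1, 8, 10, 13} : Finset (ZMod 14)).card := by
            apply Finset.card_le_card
            intro v hv
            have := hT v hv
            fin_cases this <;> first | decide | (exact absurd hv h3) | (exact absurd hv h6)
        _ = 4 := by decide
  omega
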